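/- Let M : Matrix (Fin n) (Fin n) ℝ be defined by M i j = (if π i = j then a i j else 0) + (if τ i = j then a i j else 0) (the matrix of structural constants of E^n_{π,τ}). If det M ≠ 0, then the only absolute nilpotent element of E^n_{π,τ} is x = 0. -/
import Mathlib


/-- The product of the evolution algebra `E_{π,τ}(a)` on a finite type `ι`. -/
noncomputable def evolMul {ι : Type*} [Fintype ι] [DecidableEq ι]
    (π τ : Equiv.Perm ι) (a : ι → ι → ℝ) (x y : ι → ℝ) : ι → ℝ :=
  fun j => ∑ i, x i * y i *
    ((if π i = j then a i (π i) else 0) + (if τ i = j then a i (τ i) else 0))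

/-- if the matrix of structural constants of `E^n_{π,τ}` has nonzero
determinant, then the only absolute nilpotent element is `x = 0`. -/
theorem stmt_3 (n : ℕ) (π τ : Equiv.Perm (Fin n)) (a : Fin n → Fin n → ℝ)
    (M : Matrix (Fin n) (Fin n) ℝ)
    (hM : ∀ i j, M i j = (if π i = j then a i j else 0) + (if τ i = j then a i j else 0))
    (hdet : M.det ≠ 0) :
    ∀ x : Fin n → ℝ, evolMul π τ a x x = 0 → x = 0 := by
  intro x hx
  have key : Matrix.vecMul (fun i => x i * x i) M = 0 := by
    funext j
    have := congrFun hx j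
    simp only [evolMul, Pi.zero_apply] at this
    rw [Matrix.vecMul, Pi.zero_apply]
    rw [← this]
    simp only [dotProduct]
    apply Finset.sum_congr rfl
    intro i _
    rw [hM i j]
    split_ifs with h1 h2 h2 <;> simp_all
  have hsq : (fun i => x i * x i) = 0 :=
    Matrix.eq_zero_of_vecMul_eq_zero hdet key
  funext i
  have := congrFun hsq i
  simp only [Pi.zero_apply] at this
  exact mul_self_eq_zero.mp this
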